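/- Suppose q > μ and fix ε ∈ ℝ. There exists a continuously differentiable function g : (−∞, ε) → (0, k*) satisfying the ordinary differential equation g'(s) = 1 − Z(g(s))/(q·W(g(s))) for all s < ε, together with the boundary conditions lim_{s↑ε} g(s) = 0 and lim_{s→−∞} g(s) = k*. -/

import Mathlib

open Real Filter Set MeasureTheory

noncomputable def dlt (σ μ q : ℝ) : ℝ := Real.sqrt ((μ / σ ^ 2 - 1 / 2) ^ 2 + 2 * q / σ ^ 2)

noncomputable def gma (σ μ : ℝ) : ℝ := 1 / 2 - μ / σ ^ 2

noncomputable def gma1 (σ μ q : ℝ) : ℝ := gma σ μ - dlt σ μ q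

noncomputable def gma2 (σ μ q : ℝ) : ℝ := gma σ μ + dlt σ μ q

/-- The scale function `W^{(q)}` of `X_t = (μ - σ²/2) t + σ B_t`. -/
noncomputable def W (σ μ q : ℝ) (x : ℝ) : ℝ :=
  if 0 ≤ x then 2 / (σ ^ 2 * dlt σ μ q) * Real.exp (gma σ μ * x) * Real.sinh (dlt σ μ q * x)
  else 0

/-- The scale function `Z^{(q)}` of `X_t = (μ - σ²/2) t + σ B_t`. -/
noncomputable def Z (σ μ q : ℝ) (x : ℝ) : ℝ :=
  if 0 ≤ x then
    Real.exp (gma σ μ * x) * Real.cosh (dlt σ μ q * x)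
      - gma σ μ / dlt σ μ q * Real.exp (gma σ μ * x) * Real.sinh (dlt σ μ q * x)
  else 1

/-- `k* = (γ₂ - γ₁)⁻¹ log((1 - 1/γ₁)/(1 - 1/γ₂))`. -/
noncomputable def kstar (σ μ q : ℝ) : ℝ :=
  (gma2 σ μ q - gma1 σ μ q)⁻¹ *
    Real.log ((1 - 1 / gma1 σ μ q) / (1 - 1 / gma2 σ μ q))

private theorem scale_alg (σ q γ d e f : ℝ) (hσ : 0 < σ) (hq : 0 < q) (hd : 0 < d)
    (he1 : 1 < e) (hf : f ≠ 0) (hrel : γ^2 - d^2 = -(2*q)/σ^2) :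
    1 - (f * ((e + e⁻¹)/2) - γ/d * f * ((e - e⁻¹)/2)) /
        (q * (2/(σ^2*d) * f * ((e - e⁻¹)/2)))
      = ((γ-d)*((γ+d)-1)*e^2 - (γ+d)*((γ-d)-1)) / (((γ-d)*(γ+d))*(e^2-1)) := by
  have he0 : (0:ℝ) < e := by linarith
  have he : e ≠ 0 := he0.ne'
  have he2 : e^2 - 1 ≠ 0 := by nlinarith
  have hm : e - e⁻¹ = (e^2-1)/e := by field_simp
  have hp : e + e⁻¹ = (e^2+1)/e := by field_simp
  have hσ2 : σ^2 ≠ 0 := by positivity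
  have hqe : q = -(σ^2*(γ^2-d^2))/2 := by field_simp at hrel; linarith
  have had : (γ-d)*(γ+d) ≠ 0 := by intro h; rw [hqe] at hq; nlinarith
  subst hqe
  have hgd : γ^2 - d^2 ≠ 0 := by intro h; nlinarith
  rw [hm, hp]
  field_simp
  ring_nf
  field_simp
  ring

set_option maxHeartbeats 2000000 in
theorem stmt_11 (σ μ q ε : ℝ) (hσ : 0 < σ) (hq : 0 < q) (hqμ : μ < q) :
    ∃ g : ℝ → ℝ,
      (∀ s ∈ Set.Iio ε, g s ∈ Set.Ioo 0 (kstar σ μ q)) ∧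
      ContDiffOn ℝ 1 g (Set.Iio ε) ∧
      (∀ s ∈ Set.Iio ε, HasDerivAt g (1 - Z σ μ q (g s) / (q * W σ μ q (g s))) s) ∧
      Filter.Tendsto g (nhdsWithin ε (Set.Iio ε)) (nhds 0) ∧
      Filter.Tendsto g Filter.atBot (nhds (kstar σ μ q)) := by
  have hσ2 : (0:ℝ) < σ^2 := by positivity
  obtain ⟨γ, hγdef⟩ : ∃ γ, γ = gma σ μ := ⟨_, rfl⟩
  obtain ⟨d, hddef⟩ : ∃ d, d = dlt σ μ q := ⟨_, rfl⟩
  obtain ⟨a, hadef⟩ : ∃ a, a = gma1 σ μ q := ⟨_, rfl⟩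
  obtain ⟨b, hbdef⟩ : ∃ b, b = gma2 σ μ q := ⟨_, rfl⟩
  obtain ⟨k, hkdef⟩ : ∃ k, k = kstar σ μ q := ⟨_, rfl⟩
  rw [← hkdef]
  have hγval : γ = 1/2 - μ/σ^2 := by rw [hγdef, gma]
  have h2q : (0:ℝ) < 2*q/σ^2 := div_pos (by linarith) hσ2
  have hd2 : d^2 = γ^2 + 2*q/σ^2 := by
    rw [hddef, dlt, sq_sqrt (by nlinarith [sq_nonneg (μ/σ^2 - 1/2)])]
    rw [hγval]; ring
  have hd : 0 < d := by
    rw [hddef, dlt]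
    apply Real.sqrt_pos.2
    nlinarith [sq_nonneg (μ/σ^2 - 1/2)]
  have haγ : a = γ - d := by rw [hadef, gma1, ← hγdef, ← hddef]
  have hbγ : b = γ + d := by rw [hbdef, gma2, ← hγdef, ← hddef]
  have hdγ : γ^2 < d^2 := by rw [hd2]; linarith
  have ha : a < 0 := by
    rw [haγ]
    nlinarith [hdγ, hd, sq_nonneg (d + γ), sq_nonneg (d - γ)]
  have hμq : 2*μ/σ^2 < 2*q/σ^2 := by
    have h : 0 < 2*(q-μ)/σ^2 := div_pos (by linarith) hσ2
    have h2 : 2*q/σ^2 - 2*μ/σ^2 = 2*(q-μ)/σ^2 := by ring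
    linarith
  have hb1 : 1 < b := by
    have key : (1-γ)^2 < d^2 := by
      rw [hd2, hγval]
      have hexp : (1 - (1/2 - μ/σ^2))^2 - ((1/2 - μ/σ^2)^2) = 2*μ/σ^2 := by ring
      linarith
    have h1γ : 1 - γ < d := by
      nlinarith [key, hd, sq_nonneg (d + (1 - γ)), sq_nonneg (d - (1-γ))]
    rw [hbγ]; linarith
  have hb : 0 < b := by linarith
  have ha1 : a - 1 < 0 := by linarith
  have ha1' : a - 1 ≠ 0 := by intro h; rw [h] at ha1; exact lt_irrefl 0 ha1
  have hb1' : (0:ℝ) < b - 1 := by linarith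
  have hb1'' : b - 1 ≠ 0 := hb1'.ne'
  have hab : a*b = -(2*q)/σ^2 := by
    have h1 : a*b = γ^2 - d^2 := by rw [haγ, hbγ]; ring
    rw [h1, hd2]; ring
  have habneg : a*b < 0 := by rw [hab]; exact div_neg_of_neg_of_pos (by linarith) hσ2
  have ha0 : a ≠ 0 := ha.ne
  have hb0 : b ≠ 0 := hb.ne'
  have hrel : γ^2 - d^2 = -(2*q)/σ^2 := by
    have h1 : a*b = γ^2 - d^2 := by rw [haγ, hbγ]; ring
    linarith [hab]
  obtain ⟨A, hAdef⟩ : ∃ A, A = a*(b-1) := ⟨_, rfl⟩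
  obtain ⟨B, hBdef⟩ : ∃ B, B = b*(a-1) := ⟨_, rfl⟩
  have hA : A < 0 := by rw [hAdef]; exact mul_neg_of_neg_of_pos ha hb1'
  have hB : B < 0 := by rw [hBdef]; exact mul_neg_of_pos_of_neg hb ha1
  have hA0 : A ≠ 0 := hA.ne
  have hAB : A - B = 2*d := by
    rw [hAdef, hBdef, haγ, hbγ]; ring
  have hba : b - a = 2*d := by rw [haγ, hbγ]; ring
  have h1b : (1:ℝ) - 1/b ≠ 0 := by
    have : (0:ℝ) < 1 - 1/b := by
      rw [sub_pos, div_lt_one hb]; exact hb1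
    exact this.ne'
  have harg : (1 - 1/a)/(1 - 1/b) = B/A := by
    rw [hAdef, hBdef, div_eq_div_iff h1b (mul_neg_of_neg_of_pos ha hb1').ne]
    field_simp
  have hk : k = (2*d)⁻¹ * Real.log (B/A) := by
    rw [hkdef, kstar, ← hadef, ← hbdef, hba, harg]
  have hBA1 : 1 < B/A := by
    have h1 : B < A := by linarith
    rw [lt_div_iff_of_neg hA]; linarith
  have hBA0 : 0 < B/A := by linarith
  have hk0 : 0 < k := by
    rw [hk]
    exact mul_pos (inv_pos.2 (by linarith)) (Real.log_pos hBA1)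
  have hek : Real.exp (2*d*k) = B/A := by
    rw [hk, show 2*d*((2*d)⁻¹*Real.log (B/A)) = Real.log (B/A) from by
      field_simp]
    exact Real.exp_log hBA0
  obtain ⟨cβ, hcβdef⟩ : ∃ c, c = -1/((a-1)*(b-1)) := ⟨_, rfl⟩
  have hcβpos : 0 < cβ := by
    rw [hcβdef]
    exact div_pos_of_neg_of_neg (by norm_num) (mul_neg_of_neg_of_pos ha1 hb1')
  obtain ⟨Ψ, hΨdef⟩ : ∃ Ψ : ℝ → ℝ, Ψ = fun x => a/(a-1)*x + cβ*Real.log (A*Real.exp (2*d*x) - B)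
      + (ε - cβ*Real.log (2*d)) := ⟨_, rfl⟩
  -- positivity of log argument on Iio k
  have hpos : ∀ x < k, 0 < A*Real.exp (2*d*x) - B := by
    intro x hx
    have h1 : Real.exp (2*d*x) < B/A := by
      rw [← hek]
      exact Real.exp_lt_exp.2 ((mul_lt_mul_iff_right₀ (by linarith : (0:ℝ) < 2*d)).2 hx)
    have h2 : A*(B/A) < A*Real.exp (2*d*x) := by
      exact mul_lt_mul_of_neg_left h1 hA
    have h3 : A*(B/A) = B := by field_simp [hA0]
    linarith
  -- derivative of Ψ
  have hΨd : ∀ x < k, HasDerivAt Ψ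
      (a/(a-1) + cβ * ((A*(Real.exp (2*d*x) * (2*d)))/(A*Real.exp (2*d*x) - B))) x := by
    intro x hx
    have h1 : HasDerivAt (fun y : ℝ => 2*d*y) (2*d) x := by
      simpa using (hasDerivAt_id x).const_mul (2*d)
    have h2 := h1.exp
    have h3 := (h2.const_mul A).sub_const B
    have h4 := h3.log (hpos x hx).ne'
    have h5 := h4.const_mul cβ
    have h6 : HasDerivAt (fun y : ℝ => a/(a-1)*y) (a/(a-1)) x := by
      simpa using (hasDerivAt_id x).const_mul (a/(a-1))
    have h7 := (h6.add h5).add_const (ε - cβ*Real.log (2*d))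
    rw [hΨdef]
    exact h7
  -- derivative value identity (pure algebra)
  have hDval : ∀ u : ℝ, A*u - B ≠ 0 →
      a/(a-1) + cβ * ((A*(u * (2*d)))/(A*u - B)) = ((a*b)*(u-1))/(A*u - B) := by
    intro u hu
    rw [hcβdef, hAdef, hBdef, ← hba]
    rw [hAdef, hBdef] at hu
    field_simp
    ring_nf
    have hu' : u*b*a - u*a + b - b*a ≠ 0 := by intro h; apply hu; linear_combination h
    linear_combination -(mul_inv_cancel₀ hu')
  -- scale-function identity
  have hkey : ∀ x : ℝ, 0 < x →
      1 - Z σ μ q x / (q * W σ μ q x)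
        = (A*Real.exp (2*d*x) - B)/((a*b)*(Real.exp (2*d*x) - 1)) := by
    intro x hx
    have h0 : (0:ℝ) ≤ x := hx.le
    have hE2 : Real.exp (2*d*x) = Real.exp (d*x)^2 := by
      rw [show 2*d*x = d*x + d*x from by ring, Real.exp_add, sq]
    have hE1 : 1 < Real.exp (d*x) := by
      rw [show (1:ℝ) = Real.exp 0 from (Real.exp_zero).symm]
      exact Real.exp_lt_exp.2 (mul_pos hd hx)
    have hf : Real.exp (γ*x) ≠ 0 := (Real.exp_pos _).ne'
    have hscale := scale_alg σ q γ d (Real.exp (d*x)) (Real.exp (γ*x)) hσ hq hd hE1 hf hrel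
    rw [Z, W, if_pos h0, if_pos h0, ← hγdef, ← hddef, Real.sinh_eq, Real.cosh_eq, Real.exp_neg,
      hE2, hAdef, hBdef, haγ, hbγ]
    exact hscale
  -- Ψ 0 = ε
  have hΨ0 : Ψ 0 = ε := by
    rw [hΨdef]
    simp only [mul_zero, Real.exp_zero, mul_one]
    rw [show A - B = 2*d from hAB]
    ring
  -- Ψ strictly antitone on Ico 0 k
  have hΨc : ContinuousOn Ψ (Ico 0 k) := fun x hx =>
    ((hΨd x hx.2).continuousAt).continuousWithinAt
  have hderivneg : ∀ x ∈ Ioo 0 k,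
      a/(a-1) + cβ * ((A*(Real.exp (2*d*x) * (2*d)))/(A*Real.exp (2*d*x) - B)) < 0 := by
    intro x hx
    rw [hDval _ (hpos x hx.2).ne']
    apply div_neg_of_neg_of_pos _ (hpos x hx.2)
    have hu1 : 1 < Real.exp (2*d*x) := by
      rw [show (1:ℝ) = Real.exp 0 from (Real.exp_zero).symm]
      exact Real.exp_lt_exp.2 (by have := mul_pos hd hx.1; linarith)
    exact mul_neg_of_neg_of_pos habneg (by linarith)
  have hanti : StrictAntiOn Ψ (Ico 0 k) := by
    apply strictAntiOn_of_deriv_neg (convex_Ico 0 k) hΨc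
    intro x hx
    rw [interior_Ico] at hx
    rw [(hΨd x hx.2).deriv]
    exact hderivneg x hx
  have hΨlt : ∀ x ∈ Ioo 0 k, Ψ x < ε := by
    intro x hx
    rw [← hΨ0]
    exact hanti ⟨le_refl 0, hk0⟩ ⟨hx.1.le, hx.2⟩ hx.1
  -- surjectivity onto Iio ε
  have hsurj : ∀ s < ε, ∃ x ∈ Ioo 0 k, Ψ x = s := by
    intro s hs
    -- Ψ tends to -∞ at k from the left
    have tendA : Tendsto (fun x => A*Real.exp (2*d*x) - B) (nhdsWithin k (Iio k)) (nhdsWithin 0 (Ioi 0)) := by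
      apply tendsto_nhdsWithin_of_tendsto_nhds_of_eventually_within
      · have hcont : Continuous (fun x : ℝ => A*Real.exp (2*d*x) - B) :=
          (continuous_const.mul (Real.continuous_exp.comp (continuous_const.mul continuous_id))).sub
            continuous_const
        have h1 : A*Real.exp (2*d*k) - B = 0 := by
          rw [hek]; field_simp; ring
        have := hcont.tendsto k
        rw [h1] at this
        exact this.mono_left nhdsWithin_le_nhds
      · exact eventually_nhdsWithin_of_forall (fun x hx => hpos x hx)
    have tendlog : Tendsto (fun x => cβ * Real.log (A*Real.exp (2*d*x) - B))
        (nhdsWithin k (Iio k)) atBot :=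
      (Real.tendsto_log_nhdsGT_zero.comp tendA).const_mul_atBot hcβpos
    have tendlin : Tendsto (fun x => a/(a-1)*x + (ε - cβ*Real.log (2*d)))
        (nhdsWithin k (Iio k)) (nhds (a/(a-1)*k + (ε - cβ*Real.log (2*d)))) := by
      apply Tendsto.mono_left _ nhdsWithin_le_nhds
      exact (((continuous_const.mul continuous_id).add continuous_const).tendsto k)
    have tendΨ : Tendsto Ψ (nhdsWithin k (Iio k)) atBot := by
      have := tendlin.add_atBot tendlog
      apply this.congr
      intro x; rw [hΨdef]; ring
    have hev : ∀ᶠ x in nhdsWithin k (Iio k), Ψ x < s ∧ x ∈ Ioo 0 k := by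
      refine (tendΨ.eventually (eventually_lt_atBot s)).and ?_
      exact eventually_of_mem (Ioo_mem_nhdsLT_of_mem ⟨hk0, le_refl k⟩) (fun x hx => hx)
    obtain ⟨x1, hx1s, hx1m⟩ := hev.exists
    have hc2 : ContinuousOn Ψ (Icc 0 x1) := hΨc.mono
      (fun y hy => ⟨hy.1, lt_of_le_of_lt hy.2 hx1m.2⟩)
    have hIVT := intermediate_value_Ioo' hx1m.1.le hc2
    have hmem : s ∈ Ioo (Ψ x1) (Ψ 0) := ⟨hx1s, by rw [hΨ0]; exact hs⟩
    obtain ⟨x, hxm, hxv⟩ := hIVT hmem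
    exact ⟨x, ⟨hxm.1, lt_trans hxm.2 hx1m.2⟩, hxv⟩
  -- the inverse function
  obtain ⟨g, hgdef⟩ : ∃ g : ℝ → ℝ, g = Function.invFunOn Ψ (Ioo 0 k) := ⟨_, rfl⟩
  have hgmem : ∀ s < ε, g s ∈ Ioo 0 k := by
    intro s hs
    obtain ⟨x, hx, hxv⟩ := hsurj s hs
    rw [hgdef]
    exact Function.invFunOn_mem ⟨x, hx, hxv⟩
  have hgval : ∀ s < ε, Ψ (g s) = s := by
    intro s hs
    obtain ⟨x, hx, hxv⟩ := hsurj s hs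
    rw [hgdef]
    exact Function.invFunOn_eq ⟨x, hx, hxv⟩
  have hginv : ∀ x ∈ Ioo 0 k, g (Ψ x) = x := by
    intro x hx
    have h1 := hgval (Ψ x) (hΨlt x hx)
    have h2 := hgmem (Ψ x) (hΨlt x hx)
    exact hanti.injOn (Ioo_subset_Ico_self h2) (Ioo_subset_Ico_self hx) h1
  -- comparison lemmas
  have hlt1 : ∀ s, s < ε → ∀ x ∈ Ioo 0 k, s < Ψ x → x < g s := by
    intro s hs x hx hsx
    by_contra h
    push_neg at h
    rcases eq_or_lt_of_le h with he | hlt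
    · rw [← he, hgval s hs] at hsx; exact lt_irrefl s hsx
    · have := hanti (Ioo_subset_Ico_self (hgmem s hs)) (Ioo_subset_Ico_self hx) hlt
      rw [hgval s hs] at this
      linarith
  have hlt2 : ∀ s, s < ε → ∀ x ∈ Ioo 0 k, Ψ x < s → g s < x := by
    intro s hs x hx hsx
    by_contra h
    push_neg at h
    rcases eq_or_lt_of_le h with he | hlt
    · rw [he, hgval s hs] at hsx; exact lt_irrefl s hsx
    · have := hanti (Ioo_subset_Ico_self hx) (Ioo_subset_Ico_self (hgmem s hs)) hlt
      rw [hgval s hs] at this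
      linarith
  -- continuity of g
  have hgc : ∀ s < ε, ContinuousAt g s := by
    intro s hs
    have hmono : StrictMonoOn (fun t => -(g t)) (Iio ε) := by
      intro s1 hs1 s2 hs2 h12
      have : g s2 < g s1 := by
        apply hlt2 s2 hs2 (g s1) (hgmem s1 hs1)
        rw [hgval s1 hs1]; exact h12
      simpa using this
    have himg : (fun t => -(g t)) '' (Iio ε) ∈ nhds (-(g s)) := by
      apply mem_of_superset (IsOpen.mem_nhds isOpen_Ioo
        (show -(g s) ∈ Ioo (-k) 0 from ⟨by linarith [(hgmem s hs).2], by linarith [(hgmem s hs).1]⟩))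
      rintro y ⟨hy1, hy2⟩
      have hymem : -y ∈ Ioo 0 k := ⟨by linarith, by linarith⟩
      refine ⟨Ψ (-y), hΨlt _ hymem, ?_⟩
      show -(g (Ψ (-y))) = y
      rw [hginv _ hymem]; ring
    have hcont := hmono.continuousAt_of_image_mem_nhds (Iio_mem_nhds hs) himg
    have := hcont.neg
    simpa only [Pi.neg_def, neg_neg] using this
  -- derivative of g
  have hgderiv : ∀ s ∈ Iio ε, HasDerivAt g (1 - Z σ μ q (g s) / (q * W σ μ q (g s))) s := by
    intro s hs
    rw [mem_Iio] at hs
    have hx0 := hgmem s hs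
    have hval : 1 - Z σ μ q (g s) / (q * W σ μ q (g s))
        = (A*Real.exp (2*d*(g s)) - B)/((a*b)*(Real.exp (2*d*(g s)) - 1)) := hkey _ hx0.1
    have hu1 : 1 < Real.exp (2*d*(g s)) := by
      rw [show (1:ℝ) = Real.exp 0 from (Real.exp_zero).symm]
      exact Real.exp_lt_exp.2 (by have := mul_pos hd hx0.1; linarith)
    have hvneg : (A*Real.exp (2*d*(g s)) - B)/((a*b)*(Real.exp (2*d*(g s)) - 1)) < 0 :=
      div_neg_of_pos_of_neg (hpos _ hx0.2) (mul_neg_of_neg_of_pos habneg (by linarith))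
    have hΨ1 : HasDerivAt Ψ ((1 - Z σ μ q (g s) / (q * W σ μ q (g s)))⁻¹) (g s) := by
      have h1 := hΨd (g s) hx0.2
      have h2 : a/(a-1) + cβ * ((A*(Real.exp (2*d*(g s)) * (2*d)))/(A*Real.exp (2*d*(g s)) - B))
          = (1 - Z σ μ q (g s) / (q * W σ μ q (g s)))⁻¹ := by
        rw [hval, inv_div]
        exact hDval _ (hpos _ hx0.2).ne'
      rw [h2] at h1
      exact h1
    have hne : (1 - Z σ μ q (g s) / (q * W σ μ q (g s)))⁻¹ ≠ 0 := by
      rw [hval]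
      exact inv_ne_zero hvneg.ne
    have hloc : ∀ᶠ y in nhds s, Ψ (g y) = y :=
      eventually_of_mem (Iio_mem_nhds hs) (fun y hy => hgval y hy)
    have := HasDerivAt.of_local_left_inverse (hgc s hs) hΨ1 hne hloc
    rwa [inv_inv] at this
  -- ContDiffOn
  have hgcd : ContDiffOn ℝ 1 g (Iio ε) := by
    rw [show (1 : WithTop ℕ∞) = 0 + 1 from rfl]
    rw [contDiffOn_succ_iff_deriv_of_isOpen isOpen_Iio]
    refine ⟨fun s hs => (hgderiv s hs).differentiableAt.differentiableWithinAt, by simp, ?_⟩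
    rw [contDiffOn_zero]
    have hcongr : EqOn (deriv g)
        ((fun x => (A*Real.exp (2*d*x) - B)/((a*b)*(Real.exp (2*d*x) - 1))) ∘ g) (Iio ε) := by
      intro s hs
      show deriv g s = (A*Real.exp (2*d*(g s)) - B)/((a*b)*(Real.exp (2*d*(g s)) - 1))
      rw [(hgderiv s hs).deriv]
      exact hkey _ (hgmem s hs).1
    have hfc : ContinuousOn (fun x => (A*Real.exp (2*d*x) - B)/((a*b)*(Real.exp (2*d*x) - 1)))
        (Ioo 0 k) := by
      apply ContinuousOn.div
      · exact ((continuous_const.mul (Real.continuous_exp.comp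
          (continuous_const.mul continuous_id))).sub continuous_const).continuousOn
      · exact (continuous_const.mul ((Real.continuous_exp.comp
          (continuous_const.mul continuous_id)).sub continuous_const)).continuousOn
      · intro x hx
        have hu1 : 1 < Real.exp (2*d*x) := by
          rw [show (1:ℝ) = Real.exp 0 from (Real.exp_zero).symm]
          exact Real.exp_lt_exp.2 (by have := mul_pos hd hx.1; linarith)
        exact (mul_neg_of_neg_of_pos habneg (by linarith)).ne
    have hgco : ContinuousOn g (Iio ε) := fun s hs => (hgc s hs).continuousWithinAt
    exact (hfc.comp hgco (fun s hs => hgmem s hs)).congr hcongr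
  -- limit at ε from the left
  have hlimε : Tendsto g (nhdsWithin ε (Iio ε)) (nhds 0) := by
    rw [tendsto_order]
    constructor
    · intro c hc
      exact eventually_of_mem self_mem_nhdsWithin
        (fun s hs => lt_trans hc (hgmem s hs).1)
    · intro c hc
      set x1 := min (c/2) (k/2) with hx1def
      have hx1m : x1 ∈ Ioo 0 k := ⟨lt_min (by linarith) (by linarith),
        lt_of_le_of_lt (min_le_right _ _) (by linarith)⟩
      have hΨx1 : Ψ x1 < ε := hΨlt x1 hx1m
      apply eventually_of_mem (Ioo_mem_nhdsLT_of_mem ⟨hΨx1, le_refl ε⟩)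
      intro s hs
      have := hlt2 s hs.2 x1 hx1m hs.1
      have hx1c : x1 ≤ c/2 := min_le_left _ _
      linarith
  -- limit at -∞
  have hlimbot : Tendsto g atBot (nhds k) := by
    rw [tendsto_order]
    constructor
    · intro c hc
      obtain ⟨x1, hx1a, hx1b⟩ := exists_between (show max c (k/2) < k from max_lt hc (by linarith))
      have hx1m : x1 ∈ Ioo 0 k := ⟨lt_of_lt_of_le (by linarith) (le_of_lt (lt_of_le_of_lt (le_max_right c (k/2)) hx1a)), hx1b⟩
      have hΨx1 : Ψ x1 < ε := hΨlt x1 hx1m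
      apply eventually_of_mem (eventually_le_atBot (min (Ψ x1) ε - 1))
      intro s hs
      have hs1 : s < Ψ x1 := by
        have := min_le_left (Ψ x1) ε; simp only [mem_setOf_eq] at hs; linarith
      have hs2 : s < ε := by
        have := min_le_right (Ψ x1) ε; simp only [mem_setOf_eq] at hs; linarith
      have := hlt1 s hs2 x1 hx1m hs1
      have : x1 < g s := this
      have hcx1 : c < x1 := lt_of_le_of_lt (le_max_left c (k/2)) hx1a
      linarith
    · intro c hc
      apply eventually_of_mem (eventually_le_atBot (ε - 1))
      intro s hs
      simp only [mem_setOf_eq] at hs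
      have : s < ε := by linarith
      exact lt_trans (hgmem s this).2 hc
  exact ⟨g, fun s hs => hgmem s hs, hgcd, hgderiv, hlimε, hlimbot⟩
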